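/- Let 𝒜 and ℬ be almost disjoint families on ω of size κ with cf(κ) > ω, and let h : 𝒜 → ℬ be a bijection. Then for every n ∈ ω there exist x, y, z ∈ 𝒜 such that (1) max(x ∩ y) > n and x ∩ y ⊊ x ∩ z, and (2) max(h(x) ∩ h(y)) > n and h(x) ∩ h(y) ⊊ h(x) ∩ h(z). -/

import Mathlib

open Set Cardinal

/-- An almost disjoint family on ω. -/
lemma fiber_set {α : Type} {C : Type} [Countable C] {κ : Cardinal}
    (hcf : Cardinal.aleph0 < κ.ord.cof) (S : Set α) (hS : Cardinal.mk ↥S = κ)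
    (f : α → C) : ∃ c : C, Cardinal.mk ↥{a ∈ S | f a = c} = κ := by
  have h1 : Cardinal.aleph0 ≤ Cardinal.mk ↥S := by
    rw [hS]; exact hcf.le.trans (Ordinal.cof_ord_le κ)
  have h2 : Cardinal.mk C < (Cardinal.mk ↥S).ord.cof := by
    rw [hS]; exact lt_of_le_of_lt Cardinal.mk_le_aleph0 hcf
  obtain ⟨c, hc⟩ := Cardinal.infinite_pigeonhole (fun b : ↥S => f b.val) h1 h2
  refine ⟨c, ?_⟩
  rw [← hS, ← hc]
  exact Cardinal.mk_congr
    (Equiv.subtypeSubtypeEquivSubtypeInter (· ∈ S) (fun a => f a = c)).symm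

lemma min_above_mem {u : Set ℕ} (hu : u.Infinite) (M : ℕ) :
    sInf {m | m ∈ u ∧ M < m} ∈ u ∧ M < sInf {m | m ∈ u ∧ M < m} := by
  have hne : {m | m ∈ u ∧ M < m}.Nonempty := by
    obtain ⟨m, hm, hm2⟩ := hu.exists_gt M
    exact ⟨m, hm, hm2⟩
  exact Nat.sInf_mem hne

lemma set_infinite_of_mk {α : Type} {κ : Cardinal} (hκ : Cardinal.aleph0 ≤ κ)
    {S : Set α} (hS : Cardinal.mk ↥S = κ) : S.Infinite := by
  rw [← Set.infinite_coe_iff] at *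
  exact Cardinal.infinite_iff.2 (by rw [hS]; exact hκ)

/-- An almost disjoint family on ω. -/
def ADFamily (𝒜 : Set (Set ℕ)) : Prop :=
  𝒜.Infinite ∧ (∀ A ∈ 𝒜, A.Infinite) ∧
    ∀ A ∈ 𝒜, ∀ B ∈ 𝒜, A ≠ B → (A ∩ B).Finite

/-- Lemma 6: for AD families 𝒜, ℬ of size κ with cf(κ) > ω and h : 𝒜 → ℬ a
bijection, for every n there are x, y, z ∈ 𝒜 with max(x ∩ y) > n,
x ∩ y ⊊ x ∩ z, max(h(x) ∩ h(y)) > n and h(x) ∩ h(y) ⊊ h(x) ∩ h(z). -/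
theorem adFamily_triples (κ : Cardinal) (hcf : Cardinal.aleph0 < κ.ord.cof)
    (𝒜 ℬ : Set (Set ℕ)) (h𝒜 : ADFamily 𝒜) (hℬ : ADFamily ℬ)
    (hc𝒜 : Cardinal.mk ↥𝒜 = κ) (hcℬ : Cardinal.mk ↥ℬ = κ)
    (h : ↥𝒜 → ↥ℬ) (hbij : Function.Bijective h) :
    ∀ n : ℕ, ∃ x y z : ↥𝒜,
      (∃ m ∈ ((x : Set ℕ) ∩ (y : Set ℕ)), n < m) ∧
      ((x : Set ℕ) ∩ (y : Set ℕ)) ⊂ ((x : Set ℕ) ∩ (z : Set ℕ)) ∧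
      (∃ m ∈ ((h x : Set ℕ) ∩ (h y : Set ℕ)), n < m) ∧
      ((h x : Set ℕ) ∩ (h y : Set ℕ)) ⊂ ((h x : Set ℕ) ∩ (h z : Set ℕ)) := by
  classical
  intro n
  have hinj := hbij.1
  have hκ : Cardinal.aleph0 ≤ κ := hcf.le.trans (Ordinal.cof_ord_le κ)
  obtain ⟨h𝒜inf, h𝒜mem, h𝒜ad⟩ := h𝒜
  obtain ⟨hℬinf, hℬmem, hℬad⟩ := hℬ
  have hAinf : ∀ a : ↥𝒜, (a : Set ℕ).Infinite := fun a => h𝒜mem a.1 a.2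
  have hBinf : ∀ a : ↥𝒜, ((h a : Set ℕ)).Infinite := fun a => hℬmem (h a).1 (h a).2
  have hU : Cardinal.mk ↥(Set.univ : Set ↥𝒜) = κ := by rw [Cardinal.mk_univ, hc𝒜]
  -- stage 1: all members contain c1 > n
  obtain ⟨c1, hT1⟩ := fiber_set hcf Set.univ hU
    (fun a : ↥𝒜 => sInf {m | m ∈ (a : Set ℕ) ∧ n < m})
  have key1 : ∀ a : ↥𝒜, a ∈ {a ∈ (Set.univ : Set ↥𝒜) |
      sInf {m | m ∈ (a : Set ℕ) ∧ n < m} = c1} → c1 ∈ (a : Set ℕ) ∧ n < c1 := by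
    intro a ha
    have h2 : sInf {m | m ∈ (a : Set ℕ) ∧ n < m} = c1 := ha.2
    have := min_above_mem (hAinf a) n
    rwa [h2] at this
  -- stage 2: all images contain c2 > n
  obtain ⟨c2, hT2⟩ := fiber_set hcf _ hT1
    (fun a : ↥𝒜 => sInf {m | m ∈ (h a : Set ℕ) ∧ n < m})
  set T2 := {a ∈ {a ∈ (Set.univ : Set ↥𝒜) |
      sInf {m | m ∈ (a : Set ℕ) ∧ n < m} = c1} |
      sInf {m | m ∈ (h a : Set ℕ) ∧ n < m} = c2} with hT2def
  have key2 : ∀ a : ↥𝒜, a ∈ T2 → c2 ∈ (h a : Set ℕ) ∧ n < c2 := by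
    intro a ha
    have h2 : sInf {m | m ∈ (h a : Set ℕ) ∧ n < m} = c2 := ha.2
    have := min_above_mem (hBinf a) n
    rwa [h2] at this
  -- pick x
  have hT2inf : T2.Infinite := set_infinite_of_mk hκ hT2
  obtain ⟨x, hx⟩ := hT2inf.nonempty
  have hfin1 : ∀ w : ↥𝒜, w ≠ x → ((x : Set ℕ) ∩ (w : Set ℕ)).Finite :=
    fun w hw => h𝒜ad x.1 x.2 w.1 w.2 (fun e => hw (Subtype.ext e.symm))
  have hfin2 : ∀ w : ↥𝒜, w ≠ x → ((h x : Set ℕ) ∩ (h w : Set ℕ)).Finite :=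
    fun w hw => hℬad (h x).1 (h x).2 (h w).1 (h w).2
      (fun e => hw (hinj (Subtype.ext e)).symm)
  -- stage 3: constant intersections with x
  set g3 : ↥𝒜 → Finset ℕ × Finset ℕ := fun w =>
    if hw : w = x then (∅, ∅)
    else ((hfin1 w hw).toFinset, (hfin2 w hw).toFinset) with hg3
  obtain ⟨FG, hT3⟩ := fiber_set hcf T2 hT2 g3
  set T3 := {a ∈ T2 | g3 a = FG} with hT3def
  have key3 : ∀ w : ↥𝒜, w ∈ T3 → w ≠ x →
      (x : Set ℕ) ∩ (w : Set ℕ) = ↑FG.1 ∧ (h x : Set ℕ) ∩ (h w : Set ℕ) = ↑FG.2 := by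
    intro w hwT hw
    have h2 : g3 w = FG := hwT.2
    rw [hg3] at h2
    simp only [dif_neg hw] at h2
    constructor
    · rw [← congrArg Prod.fst h2]; simp [Set.Finite.coe_toFinset]
    · rw [← congrArg Prod.snd h2]; simp [Set.Finite.coe_toFinset]
  -- find a witness w0 ∈ T3, w0 ≠ x, to know c1 ∈ FG.1, c2 ∈ FG.2
  have hT3inf : T3.Infinite := set_infinite_of_mk hκ hT3
  obtain ⟨w0, hw0, hw0x⟩ := (hT3inf.diff (Set.finite_singleton x)).nonempty
  have hw0x' : w0 ≠ x := by simpa using hw0x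
  have hc1F : c1 ∈ (FG.1 : Finset ℕ) := by
    have e := (key3 w0 hw0 hw0x').1
    have hx1 : c1 ∈ (x : Set ℕ) := (key1 x hx.1).1
    have hw1 : c1 ∈ (w0 : Set ℕ) := (key1 w0 hw0.1.1).1
    have : c1 ∈ (x : Set ℕ) ∩ (w0 : Set ℕ) := ⟨hx1, hw1⟩
    rw [e] at this
    exact_mod_cast this
  have hc2G : c2 ∈ (FG.2 : Finset ℕ) := by
    have e := (key3 w0 hw0 hw0x').2
    have hx1 : c2 ∈ (h x : Set ℕ) := (key2 x hx).1
    have hw1 : c2 ∈ (h w0 : Set ℕ) := (key2 w0 hw0.1).1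
    have : c2 ∈ (h x : Set ℕ) ∩ (h w0 : Set ℕ) := ⟨hx1, hw1⟩
    rw [e] at this
    exact_mod_cast this
  -- bound M
  set M : ℕ := n + FG.1.sup id + FG.2.sup id with hM
  have hFM : ∀ a ∈ (FG.1 : Finset ℕ), a ≤ M := by
    intro a ha
    have := Finset.le_sup (f := id) ha
    simp only [id] at this; omega
  have hGM : ∀ a ∈ (FG.2 : Finset ℕ), a ≤ M := by
    intro a ha
    have := Finset.le_sup (f := id) ha
    simp only [id] at this; omega
  -- stage 4: all members contain c3 > M
  obtain ⟨c3, hT4⟩ := fiber_set hcf T3 hT3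
    (fun a : ↥𝒜 => sInf {m | m ∈ (a : Set ℕ) ∧ M < m})
  set T4 := {a ∈ T3 | sInf {m | m ∈ (a : Set ℕ) ∧ M < m} = c3} with hT4def
  have key4 : ∀ a : ↥𝒜, a ∈ T4 → c3 ∈ (a : Set ℕ) ∧ M < c3 := by
    intro a ha
    have h2 : sInf {m | m ∈ (a : Set ℕ) ∧ M < m} = c3 := ha.2
    have := min_above_mem (hAinf a) M
    rwa [h2] at this
  -- stage 5: all images contain c4 > M
  obtain ⟨c4, hT5⟩ := fiber_set hcf T4 hT4
    (fun a : ↥𝒜 => sInf {m | m ∈ (h a : Set ℕ) ∧ M < m})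
  set T5 := {a ∈ T4 | sInf {m | m ∈ (h a : Set ℕ) ∧ M < m} = c4} with hT5def
  have key5 : ∀ a : ↥𝒜, a ∈ T5 → c4 ∈ (h a : Set ℕ) ∧ M < c4 := by
    intro a ha
    have h2 : sInf {m | m ∈ (h a : Set ℕ) ∧ M < m} = c4 := ha.2
    have := min_above_mem (hBinf a) M
    rwa [h2] at this
  -- pick y, z distinct, both ≠ x
  have hT5inf : T5.Infinite := set_infinite_of_mk hκ hT5
  obtain ⟨y, hy, hyx⟩ := (hT5inf.diff (Set.finite_singleton x)).nonempty
  obtain ⟨z, hz', hzy⟩ := ((hT5inf.diff (Set.finite_singleton x)).diff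
    (Set.finite_singleton y)).nonempty
  obtain ⟨hz, hzx⟩ := hz'
  have hyx' : y ≠ x := by simpa using hyx
  have hzx' : z ≠ x := by simpa using hzx
  -- memberships down the chain
  have hyT3 : y ∈ T3 := hy.1.1
  have hzT3 : z ∈ T3 := hz.1.1
  have hyT4 : y ∈ T4 := hy.1
  have hzT4 : z ∈ T4 := hz.1
  obtain ⟨eyF, eyG⟩ := key3 y hyT3 hyx'
  obtain ⟨ezF, ezG⟩ := key3 z hzT3 hzx'
  -- final verification: triple (y, x, z)
  refine ⟨y, x, z, ?_, ?_, ?_, ?_⟩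
  · exact ⟨c1, ⟨(key1 y hy.1.1.1.1).1, (key1 x hx.1).1⟩, (key1 x hx.1).2⟩
  · have hsub : (y : Set ℕ) ∩ (x : Set ℕ) ⊆ (y : Set ℕ) ∩ (z : Set ℕ) := by
      rw [Set.inter_comm (y : Set ℕ) (x : Set ℕ), eyF]
      intro a ha
      have haF : a ∈ (FG.1 : Finset ℕ) := by exact_mod_cast ha
      constructor
      · have : a ∈ (x : Set ℕ) ∩ (y : Set ℕ) := by rw [eyF]; exact ha
        exact this.2
      · have : a ∈ (x : Set ℕ) ∩ (z : Set ℕ) := by rw [ezF]; exact ha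
        exact this.2
    refine (Set.ssubset_iff_of_subset hsub).2 ⟨c3, ⟨(key4 y hyT4).1, (key4 z hzT4).1⟩, ?_⟩
    rw [Set.inter_comm (y : Set ℕ) (x : Set ℕ), eyF]
    intro hc
    have : c3 ∈ (FG.1 : Finset ℕ) := by exact_mod_cast hc
    have := hFM c3 this
    have := (key4 y hyT4).2
    omega
  · exact ⟨c2, ⟨(key2 y hy.1.1.1).1, (key2 x hx).1⟩, (key2 x hx).2⟩
  · have hsub : (h y : Set ℕ) ∩ (h x : Set ℕ) ⊆ (h y : Set ℕ) ∩ (h z : Set ℕ) := by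
      rw [Set.inter_comm (h y : Set ℕ) (h x : Set ℕ), eyG]
      intro a ha
      constructor
      · have : a ∈ (h x : Set ℕ) ∩ (h y : Set ℕ) := by rw [eyG]; exact ha
        exact this.2
      · have : a ∈ (h x : Set ℕ) ∩ (h z : Set ℕ) := by rw [ezG]; exact ha
        exact this.2
    refine (Set.ssubset_iff_of_subset hsub).2 ⟨c4, ⟨(key5 y hy).1, (key5 z hz).1⟩, ?_⟩
    rw [Set.inter_comm (h y : Set ℕ) (h x : Set ℕ), eyG]
    intro hc
    have : c4 ∈ (FG.2 : Finset ℕ) := by exact_mod_cast hc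
    have := hGM c4 this
    have := (key5 y hy).2
    omega
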